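/- arXiv:1307.6685 — 3 statements merged into one kernel-verified Lean document; each statement's English description precedes it below -/
import Mathlib

section
/- Let (ε_t)_{t∈ℤ} be an i.i.d. sequence of real random variables and c, g : ℝ → [0,∞) measurable functions. Suppose for some α ∈ (0,1] that E[c(ε_0)^α] < 1 and E[g(ε_0)^α] < ∞. Then the random series Σ_{k=0}^∞ g(ε_{t-1-k}) · Π_{j=0}^{k-1} c(ε_{t-1-j}) converges almost surely, and its α-th moment is at most E[g(ε_0)^α] / (1 - E[c(ε_0)^α]). -/
open MeasureTheory ProbabilityTheory

lemma aux_lintegral_prod_indep {Ω ι : Type*} [MeasurableSpace Ω] (μ : Measure Ω)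
    [IsProbabilityMeasure μ] (F : ι → Ω → ENNReal)
    (hF : iIndepFun F μ) (hFm : ∀ i, Measurable (F i))
    (s : Finset ι) :
    ∫⁻ ω, ∏ i ∈ s, F i ω ∂μ = ∏ i ∈ s, ∫⁻ ω, F i ω ∂μ := by
  classical
  induction s using Finset.induction_on with
  | empty => simp
  | @insert a s ha ih =>
    have hind : IndepFun (∏ j ∈ s, F j) (F a) μ :=
      hF.indepFun_finsetProd_of_notMem hFm ha
    rw [show (fun ω => ∏ i ∈ s, F i ω) = ∏ j ∈ s, F j from (funext fun ω => (Finset.prod_apply ω s F).symm)] at *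
    have hmul := lintegral_mul_eq_lintegral_mul_lintegral_of_indepFun
      (by rw [show (∏ j ∈ s, F j) = fun ω => ∏ i ∈ s, F i ω from funext fun ω => Finset.prod_apply ω s F]
          exact Finset.measurable_prod s (fun i _ => hFm i)) (hFm a) hind
    have heq : ∀ ω, ∏ i ∈ insert a s, F i ω = ((∏ j ∈ s, F j) * F a) ω := by
      intro ω
      simp [Finset.prod_insert ha, Finset.prod_apply, mul_comm]
    rw [Finset.prod_insert ha, lintegral_congr heq, hmul, ih]
    exact (mul_comm _ _)

lemma aux_ofReal_sum_rpow {ι : Type*} {α : ℝ} (hα : 0 < α) (hα1 : α ≤ 1)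
    (a : ι → ℝ) (ha : ∀ i, 0 ≤ a i) (s : Finset ι) :
    ENNReal.ofReal ((∑ i ∈ s, a i) ^ α) ≤ ∑ i ∈ s, ENNReal.ofReal (a i ^ α) := by
  classical
  induction s using Finset.induction_on with
  | empty => simp [Real.zero_rpow hα.ne']
  | @insert b s hb ih =>
    rw [Finset.sum_insert hb, Finset.sum_insert hb]
    have hs : 0 ≤ ∑ i ∈ s, a i := Finset.sum_nonneg fun i _ => ha i
    calc ENNReal.ofReal ((a b + ∑ i ∈ s, a i) ^ α)
        = (ENNReal.ofReal (a b) + ENNReal.ofReal (∑ i ∈ s, a i)) ^ α := by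
          rw [← ENNReal.ofReal_add (ha b) hs,
            ENNReal.ofReal_rpow_of_nonneg (add_nonneg (ha b) hs) hα.le]
      _ ≤ ENNReal.ofReal (a b) ^ α + ENNReal.ofReal (∑ i ∈ s, a i) ^ α :=
          ENNReal.rpow_add_le_add_rpow _ _ hα.le hα1
      _ = ENNReal.ofReal (a b ^ α) + ENNReal.ofReal ((∑ i ∈ s, a i) ^ α) := by
          rw [ENNReal.ofReal_rpow_of_nonneg (ha b) hα.le,
            ENNReal.ofReal_rpow_of_nonneg hs hα.le]
      _ ≤ _ := add_le_add le_rfl ih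

theorem garch_series_converges_and_moment_bound
    {Ω : Type*} [MeasurableSpace Ω] (μ : Measure Ω) [IsProbabilityMeasure μ]
    (ε : ℤ → Ω → ℝ) (c g : ℝ → ℝ)
    (hc : Measurable c) (hg : Measurable g)
    (hc0 : ∀ x, 0 ≤ c x) (hg0 : ∀ x, 0 ≤ g x)
    (hmeas : ∀ t, Measurable (ε t))
    (hindep : iIndepFun ε μ)
    (hident : ∀ t, IdentDistrib (ε t) (ε 0) μ μ)
    (α : ℝ) (hα : 0 < α) (hα1 : α ≤ 1)
    (hcα : ∫⁻ ω, ENNReal.ofReal (c (ε 0 ω) ^ α) ∂μ < 1)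
    (hgα : ∫⁻ ω, ENNReal.ofReal (g (ε 0 ω) ^ α) ∂μ < ⊤)
    (t : ℤ) :
    (∀ᵐ ω ∂μ, Summable (fun k : ℕ =>
        g (ε (t - 1 - (k : ℤ)) ω) * ∏ j ∈ Finset.range k, c (ε (t - 1 - (j : ℤ)) ω))) ∧
    ∫⁻ ω, ENNReal.ofReal ((∑' k : ℕ,
        g (ε (t - 1 - (k : ℤ)) ω) * ∏ j ∈ Finset.range k, c (ε (t - 1 - (j : ℤ)) ω)) ^ α) ∂μ
      ≤ (∫⁻ ω, ENNReal.ofReal (g (ε 0 ω) ^ α) ∂μ) /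
          (1 - ∫⁻ ω, ENNReal.ofReal (c (ε 0 ω) ^ α) ∂μ) := by
  classical
  set A := ∫⁻ ω, ENNReal.ofReal (c (ε 0 ω) ^ α) ∂μ with hA
  set B := ∫⁻ ω, ENNReal.ofReal (g (ε 0 ω) ^ α) ∂μ with hB
  set T : ℕ → Ω → ℝ := fun k ω =>
    g (ε (t - 1 - (k : ℤ)) ω) * ∏ j ∈ Finset.range k, c (ε (t - 1 - (j : ℤ)) ω) with hTdef
  have hT0 : ∀ k ω, 0 ≤ T k ω := fun k ω =>
    mul_nonneg (hg0 _) (Finset.prod_nonneg fun j _ => hc0 _)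
  set f : ℕ → Ω → ENNReal := fun k ω => ENNReal.ofReal (T k ω ^ α) with hfdef
  have hTmeas : ∀ k, Measurable (T k) := by
    intro k
    exact (hg.comp (hmeas _)).mul (Finset.measurable_prod _ fun j _ => hc.comp (hmeas _))
  have hfmeas : ∀ k, Measurable (f k) := by
    intro k
    have := hTmeas k
    fun_prop
  -- the α-th moment of each term
  have hIk : ∀ k : ℕ, ∫⁻ ω, f k ω ∂μ = B * A ^ k := by
    intro k
    set φ : ℤ → ℝ → ENNReal := fun z x =>
      ENNReal.ofReal ((if z = t - 1 - (k : ℤ) then g x else c x) ^ α) with hφ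
    have hφm : ∀ z, Measurable (φ z) := by
      intro z
      by_cases h : z = t - 1 - (k : ℤ) <;> simp only [hφ, h, if_true, if_false] <;> fun_prop
    have hFindep : iIndepFun (fun z => φ z ∘ ε z) μ :=
      hindep.comp φ hφm
    set S : Finset ℤ := (Finset.range k).image (fun j : ℕ => t - 1 - (j : ℤ)) with hS
    have hinj : Set.InjOn (fun j : ℕ => t - 1 - (j : ℤ)) (Finset.range k) := by
      intro a _ b _ hab
      simp only at hab
      omega
    have hkS : t - 1 - (k : ℤ) ∉ S := by
      simp only [hS, Finset.mem_image, Finset.mem_range, not_exists]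
      intro j hj
      omega
    have hpt : ∀ ω, f k ω = ∏ z ∈ insert (t - 1 - (k : ℤ)) S, φ z (ε z ω) := by
      intro ω
      rw [Finset.prod_insert hkS, hS, Finset.prod_image hinj]
      have h1 : φ (t - 1 - (k : ℤ)) (ε (t - 1 - (k : ℤ)) ω)
          = ENNReal.ofReal (g (ε (t - 1 - (k : ℤ)) ω) ^ α) := by
        simp [hφ]
      have h2 : ∀ j ∈ Finset.range k, φ (t - 1 - (j : ℤ)) (ε (t - 1 - (j : ℤ)) ω)
          = ENNReal.ofReal (c (ε (t - 1 - (j : ℤ)) ω) ^ α) := by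
        intro j hj
        simp only [hφ]
        rw [if_neg (by simp only [Finset.mem_range] at hj; omega)]
      rw [h1, Finset.prod_congr rfl h2, hfdef]
      simp only [hTdef]
      rw [Real.mul_rpow (hg0 _) (Finset.prod_nonneg fun j _ => hc0 _),
        ← Real.finset_prod_rpow _ _ (fun j _ => hc0 _),
        ENNReal.ofReal_mul (Real.rpow_nonneg (hg0 _) _),
        ENNReal.ofReal_prod_of_nonneg (fun j _ => Real.rpow_nonneg (hc0 _) _)]
    have hint : ∀ z, ∫⁻ ω, φ z (ε z ω) ∂μ = ∫⁻ ω, φ z (ε 0 ω) ∂μ := by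
      intro z
      exact ((hident z).comp (hφm z)).lintegral_eq
    calc ∫⁻ ω, f k ω ∂μ
        = ∫⁻ ω, ∏ z ∈ insert (t - 1 - (k : ℤ)) S, φ z (ε z ω) ∂μ := lintegral_congr hpt
      _ = ∏ z ∈ insert (t - 1 - (k : ℤ)) S, ∫⁻ ω, (φ z ∘ ε z) ω ∂μ :=
          aux_lintegral_prod_indep μ _ hFindep (fun z => (hφm z).comp (hmeas z)) _
      _ = B * A ^ k := by
          rw [Finset.prod_insert hkS, hS, Finset.prod_image hinj]
          have h1 : ∫⁻ ω, (φ (t - 1 - (k : ℤ)) ∘ ε (t - 1 - (k : ℤ))) ω ∂μ = B := by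
            simp only [Function.comp_apply]
            rw [hint]
            simp only [hφ, Function.comp_apply, if_pos rfl, if_true, hB]
          have h2 : ∀ j ∈ Finset.range k,
              ∫⁻ ω, (φ (t - 1 - (j : ℤ)) ∘ ε (t - 1 - (j : ℤ))) ω ∂μ = A := by
            intro j hj
            have hjk : j < k := Finset.mem_range.mp hj
            have hne : (t - 1 - (j : ℤ)) ≠ (t - 1 - (k : ℤ)) := by omega
            simp only [Function.comp_apply]
            rw [hint]
            simp only [hφ, hne, if_false, hA]
          rw [h1, Finset.prod_congr rfl h2, Finset.prod_const, Finset.card_range]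
  have h1A : (1 : ENNReal) - A ≠ 0 := by
    simp only [ne_eq, tsub_eq_zero_iff_le, not_le]
    exact hcα
  have hS_int : ∫⁻ ω, ∑' k, f k ω ∂μ = B / (1 - A) := by
    rw [lintegral_tsum (fun k => (hfmeas k).aemeasurable)]
    simp_rw [hIk]
    rw [ENNReal.tsum_mul_left, ENNReal.tsum_geometric, div_eq_mul_inv]
  have hae_top : ∀ᵐ ω ∂μ, (∑' k, f k ω) < ⊤ := by
    refine ae_lt_top (Measurable.ennreal_tsum hfmeas) ?_
    rw [hS_int]
    exact (ENNReal.div_lt_top hgα.ne h1A).ne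
  have hsummable : ∀ᵐ ω ∂μ, Summable (fun k => T k ω) := by
    filter_upwards [hae_top] with ω hω
    have h1 : Summable (fun k => T k ω ^ α) := by
      have h := ENNReal.summable_toReal hω.ne
      exact h.congr fun k => ENNReal.toReal_ofReal (Real.rpow_nonneg (hT0 _ _) _)
    have h2 : ∀ᶠ k in Filter.atTop, T k ω ≤ T k ω ^ α := by
      have h0 : Filter.Tendsto (fun k => T k ω ^ α) Filter.atTop (nhds 0) :=
        h1.tendsto_atTop_zero
      filter_upwards [h0.eventually (eventually_le_nhds one_pos)] with k hk
      rcases eq_or_lt_of_le (hT0 k ω) with h | h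
      · rw [← h, Real.zero_rpow hα.ne']
      · have hle1 : T k ω ≤ 1 := by
          by_contra hgt
          push_neg at hgt
          have h1T : (1 : ℝ) ^ α < T k ω ^ α := Real.rpow_lt_rpow zero_le_one hgt hα
          rw [Real.one_rpow] at h1T
          linarith
        calc T k ω = T k ω ^ (1 : ℝ) := (Real.rpow_one _).symm
          _ ≤ T k ω ^ α := Real.rpow_le_rpow_of_exponent_ge h hle1 hα1
    refine summable_of_isBigO_nat h1 (Asymptotics.isBigO_iff.2 ⟨1, ?_⟩)
    filter_upwards [h2] with k hk
    rw [one_mul, Real.norm_eq_abs, Real.norm_eq_abs, abs_of_nonneg (hT0 k ω),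
      abs_of_nonneg (Real.rpow_nonneg (hT0 k ω) _)]
    exact hk
  refine ⟨hsummable, ?_⟩
  have hptwise : ∀ᵐ ω ∂μ, ENNReal.ofReal ((∑' k, T k ω) ^ α) ≤ ∑' k, f k ω := by
    filter_upwards [hsummable] with ω hω
    have hP : Filter.Tendsto (fun n => ∑ k ∈ Finset.range n, T k ω) Filter.atTop
        (nhds (∑' k, T k ω)) := hω.hasSum.tendsto_sum_nat
    have hcont : Filter.Tendsto (fun n => ENNReal.ofReal ((∑ k ∈ Finset.range n, T k ω) ^ α))
        Filter.atTop (nhds (ENNReal.ofReal ((∑' k, T k ω) ^ α))) :=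
      (ENNReal.continuous_ofReal.tendsto _).comp
        (((Real.continuousAt_rpow_const _ α (Or.inr hα.le)).tendsto).comp hP)
    refine le_of_tendsto hcont (Filter.Eventually.of_forall fun n => ?_)
    calc ENNReal.ofReal ((∑ k ∈ Finset.range n, T k ω) ^ α)
        ≤ ∑ k ∈ Finset.range n, ENNReal.ofReal (T k ω ^ α) :=
          aux_ofReal_sum_rpow hα hα1 _ (fun k => hT0 k ω) _
      _ ≤ ∑' k, f k ω := ENNReal.sum_le_tsum _
  calc ∫⁻ ω, ENNReal.ofReal ((∑' k, T k ω) ^ α) ∂μ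
      ≤ ∫⁻ ω, ∑' k, f k ω ∂μ := lintegral_mono_ae hptwise
    _ = B / (1 - A) := hS_int
end

section
/- Let (ε_t)_{t∈ℤ} be i.i.d., (x_t)_{t∈ℤ} a stationary sequence independent of (ε_t), and c, g, u nonnegative measurable functions with E[c(ε_0)^α] < 1, E[g(ε_0)^α] < ∞, and E[u(x_0)^α] < ∞ for some α ∈ (0,1]. Then for each t the series σ_t^δ := Σ_{k=0}^∞ [g(ε_{t-1-k}) + u(x_{t-1-k})] · Π_{j=0}^{k-1} c(ε_{t-1-j}) converges almost surely and E[(σ_t^δ)^α] < ∞. -/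
open MeasureTheory ProbabilityTheory

lemma aux_finset_rpow_le {y : ℕ → ENNReal} {α : ℝ} (hα : 0 < α) (hα1 : α ≤ 1)
    (s : Finset ℕ) : (∑ k ∈ s, y k) ^ α ≤ ∑ k ∈ s, y k ^ α := by
  classical
  induction s using Finset.induction_on with
  | empty => simp [ENNReal.zero_rpow_of_pos hα]
  | @insert a s ha ih =>
      rw [Finset.sum_insert ha, Finset.sum_insert ha]
      exact (ENNReal.rpow_add_le_add_rpow _ _ hα.le hα1).trans (add_le_add_right ih _)

lemma aux_tsum_rpow {y : ℕ → ENNReal} {α : ℝ} (hα : 0 < α) (hα1 : α ≤ 1) :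
    (∑' k, y k) ^ α ≤ ∑' k, y k ^ α := by
  by_cases h : ∑' k, y k ^ α = ⊤
  · simp [h]
  have h1 : ∑' k, y k ≤ (∑' k, y k ^ α) ^ α⁻¹ := by
    rw [ENNReal.tsum_eq_iSup_sum]
    refine iSup_le fun s => ?_
    have h2 : (∑ k ∈ s, y k) ^ α ≤ ∑' k, y k ^ α :=
      (aux_finset_rpow_le hα hα1 s).trans (ENNReal.sum_le_tsum s)
    calc ∑ k ∈ s, y k = ((∑ k ∈ s, y k) ^ α) ^ α⁻¹ := by
          rw [ENNReal.rpow_rpow_inv hα.ne']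
      _ ≤ (∑' k, y k ^ α) ^ α⁻¹ := ENNReal.rpow_le_rpow h2 (inv_nonneg.2 hα.le)
  calc (∑' k, y k) ^ α ≤ ((∑' k, y k ^ α) ^ α⁻¹) ^ α :=
        ENNReal.rpow_le_rpow h1 hα.le
    _ = ∑' k, y k ^ α := ENNReal.rpow_inv_rpow hα.ne' _

lemma aux_summable_of_rpow {f : ℕ → ℝ} (hf : ∀ k, 0 ≤ f k) {α : ℝ} (hα : 0 < α)
    (hα1 : α ≤ 1) (h : Summable fun k => f k ^ α) : Summable f := by
  have h0 : Filter.Tendsto (fun k => f k ^ α) Filter.atTop (nhds 0) := h.tendsto_atTop_zero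
  have hev : ∀ᶠ k in Filter.atTop, f k ≤ f k ^ α := by
    filter_upwards [h0.eventually (gt_mem_nhds one_pos)] with k hk
    by_cases h1 : f k ≤ 1
    · rcases eq_or_lt_of_le (hf k) with h0' | h0'
      · simp [← h0', Real.zero_rpow hα.ne']
      · calc f k = f k ^ (1 : ℝ) := (Real.rpow_one _).symm
          _ ≤ f k ^ α := Real.rpow_le_rpow_of_exponent_ge h0' h1 hα1
    · exfalso
      push_neg at h1
      have : (1 : ℝ) ≤ f k ^ α := Real.one_le_rpow h1.le hα.le
      linarith
  obtain ⟨N, hN⟩ := Filter.eventually_atTop.mp hev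
  refine (summable_nat_add_iff N).1 ?_
  exact Summable.of_nonneg_of_le (fun k => hf _) (fun k => hN _ (Nat.le_add_left N k))
    ((summable_nat_add_iff N).2 h)

lemma aux_lintegral_prod {Ω : Type*} [MeasurableSpace Ω] {μ : Measure Ω}
    [IsProbabilityMeasure μ] {f : ℤ → Ω → ENNReal} (hf : ∀ i, Measurable (f i))
    (hind : iIndepFun f μ) (T : Finset ℤ) :
    ∫⁻ ω, ∏ i ∈ T, f i ω ∂μ = ∏ i ∈ T, ∫⁻ ω, f i ω ∂μ := by
  classical
  induction T using Finset.induction_on with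
  | empty => simp
  | @insert a T ha ih =>
      simp_rw [Finset.prod_insert ha]
      have hind' : IndepFun (f a) (fun ω => ∏ i ∈ T, f i ω) μ := by
        have := (hind.indepFun_finsetProd_of_notMem hf ha).symm
        simpa [Finset.prod_fn] using this
      rw [lintegral_mul_eq_lintegral_mul_lintegral_of_indepFun'' (hf a).aemeasurable
        ((Finset.measurable_prod T fun i _ => hf i).aemeasurable) hind', ih]

lemma aux_map_shift {Ω : Type*} [MeasurableSpace Ω] {μ : Measure Ω} {x : ℤ → Ω → ℝ}
    (hmeasx : ∀ t, Measurable (x t))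
    (hstat : Measure.map (fun ω => fun s : ℤ => x (s + 1) ω) μ =
             Measure.map (fun ω => fun s : ℤ => x s ω) μ) (s : ℤ) :
    Measure.map (x s) μ = Measure.map (x 0) μ := by
  have hΦmeas : ∀ n : ℕ, Measurable (fun ω => fun s : ℤ => x (s + n) ω) :=
    fun n => measurable_pi_lambda _ fun s => hmeasx _
  have hS : Measurable (fun f : ℤ → ℝ => fun s => f (s + 1)) :=
    measurable_pi_lambda _ fun s => measurable_pi_apply _
  have key : ∀ n : ℕ, Measure.map (fun ω => fun s : ℤ => x (s + n) ω) μ =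
      Measure.map (fun ω => fun s : ℤ => x s ω) μ := by
    intro n
    induction n with
    | zero => simp
    | succ n ih =>
        have hcomp : (fun ω => fun s : ℤ => x (s + (n + 1 : ℕ)) ω) =
            (fun f : ℤ → ℝ => fun s => f (s + 1)) ∘ (fun ω => fun s : ℤ => x (s + n) ω) := by
          funext ω
          funext s
          simp only [Function.comp_apply]
          congr 1
          push_cast
          ring
        rw [hcomp, ← Measure.map_map hS (hΦmeas n), ih,
          Measure.map_map hS (measurable_pi_lambda _ fun s => hmeasx s)]
        exact hstat
  have keval : ∀ (m : ℤ) (n : ℕ), Measure.map (x (m + n)) μ = Measure.map (x m) μ := by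
    intro m n
    have h1 : x (m + n) = (fun f : ℤ → ℝ => f m) ∘ (fun ω => fun s : ℤ => x (s + n) ω) := by
      funext ω; simp
    have h2 : x m = (fun f : ℤ → ℝ => f m) ∘ (fun ω => fun s : ℤ => x s ω) := by
      funext ω; simp
    rw [h1, h2, ← Measure.map_map (measurable_pi_apply m) (hΦmeas n),
      ← Measure.map_map (measurable_pi_apply m) (measurable_pi_lambda _ fun s => hmeasx s), key n]
  rcases le_or_gt 0 s with hs | hs
  · have := keval 0 s.toNat
    rw [show (0 : ℤ) + (s.toNat : ℤ) = s by omega] at this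
    exact this
  · have := keval s (-s).toNat
    rw [show s + ((-s).toNat : ℤ) = 0 by omega] at this
    exact this.symm

theorem garchx_causal_representation_converges
    {Ω : Type*} [MeasurableSpace Ω] (μ : Measure Ω) [IsProbabilityMeasure μ]
    (ε x : ℤ → Ω → ℝ) (c g u : ℝ → ℝ)
    (hc : Measurable c) (hg : Measurable g) (hu : Measurable u)
    (hc0 : ∀ y, 0 ≤ c y) (hg0 : ∀ y, 0 ≤ g y) (hu0 : ∀ y, 0 ≤ u y)
    (hmeasε : ∀ t, Measurable (ε t)) (hmeasx : ∀ t, Measurable (x t))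
    (hiid : iIndepFun ε μ)
    (hidentε : ∀ t, IdentDistrib (ε t) (ε 0) μ μ)
    -- stationarity of (x_t): shift invariance of the law of the whole process
    (hstat : Measure.map (fun ω => fun s : ℤ => x (s + 1) ω) μ =
             Measure.map (fun ω => fun s : ℤ => x s ω) μ)
    -- independence of the exogenous process (x_t) from the noise process (ε_t)
    (hindep : Indep (⨆ s : ℤ, MeasurableSpace.comap (x s) inferInstance)
                    (⨆ s : ℤ, MeasurableSpace.comap (ε s) inferInstance) μ)
    (α : ℝ) (hα : 0 < α) (hα1 : α ≤ 1)
    (hcα : ∫⁻ ω, ENNReal.ofReal (c (ε 0 ω) ^ α) ∂μ < 1)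
    (hgα : ∫⁻ ω, ENNReal.ofReal (g (ε 0 ω) ^ α) ∂μ < ⊤)
    (huα : ∫⁻ ω, ENNReal.ofReal (u (x 0 ω) ^ α) ∂μ < ⊤)
    (t : ℤ) :
    (∀ᵐ ω ∂μ, Summable (fun k : ℕ =>
        (g (ε (t - 1 - (k : ℤ)) ω) + u (x (t - 1 - (k : ℤ)) ω)) *
          ∏ j ∈ Finset.range k, c (ε (t - 1 - (j : ℤ)) ω))) ∧
    ∫⁻ ω, ENNReal.ofReal ((∑' k : ℕ,
        (g (ε (t - 1 - (k : ℤ)) ω) + u (x (t - 1 - (k : ℤ)) ω)) *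
          ∏ j ∈ Finset.range k, c (ε (t - 1 - (j : ℤ)) ω)) ^ α) ∂μ < ⊤ := by
  classical
  have hφc : Measurable (fun y : ℝ => ENNReal.ofReal (c y) ^ α) :=
    ENNReal.continuous_rpow_const.measurable.comp (ENNReal.measurable_ofReal.comp hc)
  have hφg : Measurable (fun y : ℝ => ENNReal.ofReal (g y) ^ α) :=
    ENNReal.continuous_rpow_const.measurable.comp (ENNReal.measurable_ofReal.comp hg)
  have hφu : Measurable (fun y : ℝ => ENNReal.ofReal (u y) ^ α) :=
    ENNReal.continuous_rpow_const.measurable.comp (ENNReal.measurable_ofReal.comp hu)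
  have hidentx : ∀ s : ℤ, IdentDistrib (x s) (x 0) μ μ := fun s =>
    ⟨(hmeasx s).aemeasurable, (hmeasx 0).aemeasurable, aux_map_shift hmeasx hstat s⟩
  set I : ℕ → ℤ := fun k => t - 1 - (k : ℤ) with hIdef
  have hIinj : Function.Injective I := by
    intro a b h
    simp only [hIdef] at h
    omega
  set A : ℕ → Ω → ENNReal := fun k ω => ENNReal.ofReal (g (ε (I k) ω)) ^ α with hA
  set B : ℕ → Ω → ENNReal := fun k ω => ENNReal.ofReal (u (x (I k) ω)) ^ α with hB
  set C : ℤ → Ω → ENNReal := fun i ω => ENNReal.ofReal (c (ε i ω)) ^ α with hCdef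
  set P : ℕ → Ω → ENNReal := fun k ω => ∏ j ∈ Finset.range k, C (I j) ω with hP
  have hAmeas : ∀ k, Measurable (A k) := fun k => hφg.comp (hmeasε _)
  have hBmeas : ∀ k, Measurable (B k) := fun k => hφu.comp (hmeasx _)
  have hCmeas : ∀ i, Measurable (C i) := fun i => hφc.comp (hmeasε i)
  have hPmeas : ∀ k, Measurable (P k) := fun k => Finset.measurable_prod _ fun j _ => hCmeas _
  set ρ : ENNReal := ∫⁻ ω, ENNReal.ofReal (c (ε 0 ω)) ^ α ∂μ with hρ
  set G : ENNReal := ∫⁻ ω, ENNReal.ofReal (g (ε 0 ω)) ^ α ∂μ with hG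
  set U : ENNReal := ∫⁻ ω, ENNReal.ofReal (u (x 0 ω)) ^ α ∂μ with hU
  have hρ1 : ρ < 1 := by
    rw [hρ, lintegral_congr (fun ω => ENNReal.ofReal_rpow_of_nonneg (hc0 _) hα.le)]
    exact hcα
  have hGfin : G < ⊤ := by
    rw [hG, lintegral_congr (fun ω => ENNReal.ofReal_rpow_of_nonneg (hg0 _) hα.le)]
    exact hgα
  have hUfin : U < ⊤ := by
    rw [hU, lintegral_congr (fun ω => ENNReal.ofReal_rpow_of_nonneg (hu0 _) hα.le)]
    exact huα
  have hCint : ∀ s : ℤ, ∫⁻ ω, C s ω ∂μ = ρ := fun s => ((hidentε s).comp hφc).lintegral_eq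
  have hAint : ∀ k, ∫⁻ ω, A k ω ∂μ = G := fun k => ((hidentε (I k)).comp hφg).lintegral_eq
  have hBint : ∀ k, ∫⁻ ω, B k ω ∂μ = U := fun k => ((hidentx (I k)).comp hφu).lintegral_eq
  have hPint : ∀ k, ∫⁻ ω, P k ω ∂μ = ρ ^ k := by
    intro k
    have hfam : iIndepFun C μ :=
      hiid.comp (fun _ y => ENNReal.ofReal (c y) ^ α) (fun _ => hφc)
    have h1 := aux_lintegral_prod hCmeas hfam ((Finset.range k).image I)
    have hinjon : ∀ a ∈ Finset.range k, ∀ b ∈ Finset.range k, I a = I b → a = b :=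
      fun a _ b _ h => hIinj h
    have h2 : ∀ ω, ∏ i ∈ (Finset.range k).image I, C i ω = P k ω := fun ω =>
      Finset.prod_image hinjon
    rw [lintegral_congr h2, Finset.prod_image hinjon] at h1
    rw [h1, Finset.prod_congr rfl (fun j _ => hCint (I j)), Finset.prod_const,
      Finset.card_range]
  have hAPint : ∀ k, ∫⁻ ω, A k ω * P k ω ∂μ = G * ρ ^ k := by
    intro k
    set ψ : ℤ → ℝ → ENNReal := fun i y =>
      if i = I k then ENNReal.ofReal (g y) ^ α else ENNReal.ofReal (c y) ^ α with hψ
    have hψmeas : ∀ i, Measurable (ψ i) := by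
      intro i
      simp only [hψ]
      split_ifs with h
      · exact hφg
      · exact hφc
    have hfam : iIndepFun (fun i ω => ψ i (ε i ω)) μ :=
      hiid.comp ψ hψmeas
    have hmeasf : ∀ i, Measurable (fun ω => ψ i (ε i ω)) := fun i => (hψmeas i).comp (hmeasε i)
    have h1 := aux_lintegral_prod hmeasf hfam ((Finset.range (k + 1)).image I)
    have hinjon : ∀ a ∈ Finset.range (k + 1), ∀ b ∈ Finset.range (k + 1), I a = I b → a = b :=
      fun a _ b _ h => hIinj h
    have h2 : ∀ ω, ∏ i ∈ (Finset.range (k + 1)).image I, ψ i (ε i ω) = A k ω * P k ω := by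
      intro ω
      rw [Finset.prod_image hinjon, Finset.prod_range_succ]
      have e1 : ψ (I k) (ε (I k) ω) = A k ω := by simp [hψ, hA]
      have e2 : ∏ j ∈ Finset.range k, ψ (I j) (ε (I j) ω) = P k ω := by
        refine Finset.prod_congr rfl fun j hj => ?_
        have hne : I j ≠ I k := fun h => absurd (hIinj h) (Finset.mem_range.1 hj).ne
        simp [hψ, hne, hCdef]
      rw [e1, e2, mul_comm]
    rw [lintegral_congr h2, Finset.prod_image hinjon, Finset.prod_range_succ] at h1
    have e3 : ∫⁻ ω, ψ (I k) (ε (I k) ω) ∂μ = G := by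
      simp only [hψ, if_pos rfl]
      exact hAint k
    have e4 : ∀ j ∈ Finset.range k, ∫⁻ ω, ψ (I j) (ε (I j) ω) ∂μ = ρ := by
      intro j hj
      have hne : I j ≠ I k := fun h => absurd (hIinj h) (Finset.mem_range.1 hj).ne
      simp only [hψ, if_neg hne]
      exact hCint (I j)
    rw [Finset.prod_congr rfl e4, e3, Finset.prod_const, Finset.card_range, mul_comm] at h1
    exact h1
  have hBPint : ∀ k, ∫⁻ ω, B k ω * P k ω ∂μ = U * ρ ^ k := by
    intro k
    have hBM : Measurable[⨆ s : ℤ, MeasurableSpace.comap (x s) inferInstance] (B k) :=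
      hφu.comp (Measurable.of_comap_le
        (le_iSup (fun s => MeasurableSpace.comap (x s) inferInstance) (I k)))
    have hPM : Measurable[⨆ s : ℤ, MeasurableSpace.comap (ε s) inferInstance] (P k) := by
      refine Finset.measurable_prod _ fun j _ => ?_
      exact hφc.comp (Measurable.of_comap_le
        (le_iSup (fun s => MeasurableSpace.comap (ε s) inferInstance) (I j)))
    have hBP : IndepFun (B k) (P k) μ :=
      Kernel.indep_of_indep_of_le_right
        (Kernel.indep_of_indep_of_le_left hindep (measurable_iff_comap_le.mp hBM))
        (measurable_iff_comap_le.mp hPM)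
    rw [lintegral_mul_eq_lintegral_mul_lintegral_of_indepFun'' (hBmeas k).aemeasurable
      (hPmeas k).aemeasurable hBP, hBint k, hPint k]
  have hWmeas : ∀ k, Measurable (fun ω => (A k ω + B k ω) * P k ω) := fun k =>
    ((hAmeas k).add (hBmeas k)).mul (hPmeas k)
  have hWint : ∀ k, ∫⁻ ω, (A k ω + B k ω) * P k ω ∂μ = (G + U) * ρ ^ k := by
    intro k
    have hsplit : ∀ ω, (A k ω + B k ω) * P k ω = A k ω * P k ω + B k ω * P k ω :=
      fun ω => add_mul _ _ _
    rw [lintegral_congr hsplit, lintegral_add_left (f := fun ω => A k ω * P k ω) ((hAmeas k).mul (hPmeas k)),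
      hAPint k, hBPint k, add_mul]
  have htsummeas : Measurable (fun ω => ∑' k : ℕ, (A k ω + B k ω) * P k ω) :=
    Measurable.ennreal_tsum fun k => hWmeas k
  have hfin : ∫⁻ ω, ∑' k : ℕ, (A k ω + B k ω) * P k ω ∂μ < ⊤ := by
    rw [lintegral_tsum fun k => (hWmeas k).aemeasurable, tsum_congr hWint,
      ENNReal.tsum_mul_left, ENNReal.tsum_geometric]
    exact ENNReal.mul_lt_top (ENNReal.add_lt_top.2 ⟨hGfin, hUfin⟩)
      (ENNReal.inv_lt_top.2 (tsub_pos_of_lt hρ1))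
  have hae : ∀ᵐ ω ∂μ, ∑' k : ℕ, (A k ω + B k ω) * P k ω < ⊤ := ae_lt_top htsummeas hfin.ne
  have hRnn : ∀ (k : ℕ) (ω : Ω), 0 ≤ (g (ε (I k) ω) + u (x (I k) ω)) *
      ∏ j ∈ Finset.range k, c (ε (I j) ω) := fun k ω =>
    mul_nonneg (add_nonneg (hg0 _) (hu0 _)) (Finset.prod_nonneg fun j _ => hc0 _)
  have hdom : ∀ (k : ℕ) (ω : Ω), ENNReal.ofReal (((g (ε (I k) ω) + u (x (I k) ω)) *
      ∏ j ∈ Finset.range k, c (ε (I j) ω)) ^ α) ≤ (A k ω + B k ω) * P k ω := by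
    intro k ω
    rw [← ENNReal.ofReal_rpow_of_nonneg (hRnn k ω) hα.le,
      ENNReal.ofReal_mul (add_nonneg (hg0 _) (hu0 _)),
      ENNReal.ofReal_prod_of_nonneg (fun j _ => hc0 _),
      ENNReal.mul_rpow_of_nonneg _ _ hα.le,
      ← ENNReal.prod_rpow_of_nonneg hα.le,
      ENNReal.ofReal_add (hg0 _) (hu0 _)]
    exact mul_le_mul_left (ENNReal.rpow_add_le_add_rpow _ _ hα.le hα1) _
  have hsummae : ∀ᵐ ω ∂μ, Summable (fun k : ℕ =>
      (g (ε (I k) ω) + u (x (I k) ω)) * ∏ j ∈ Finset.range k, c (ε (I j) ω)) := by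
    filter_upwards [hae] with ω hω
    have hle : ∑' k : ℕ, ENNReal.ofReal (((g (ε (I k) ω) + u (x (I k) ω)) *
        ∏ j ∈ Finset.range k, c (ε (I j) ω)) ^ α) ≤
        ∑' k : ℕ, (A k ω + B k ω) * P k ω := ENNReal.tsum_le_tsum fun k => hdom k ω
    have hne : ∑' k : ℕ, ENNReal.ofReal (((g (ε (I k) ω) + u (x (I k) ω)) *
        ∏ j ∈ Finset.range k, c (ε (I j) ω)) ^ α) ≠ ⊤ := (lt_of_le_of_lt hle hω).ne
    have h1 := ENNReal.summable_toReal hne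
    have h2 : (fun k : ℕ => (ENNReal.ofReal (((g (ε (I k) ω) + u (x (I k) ω)) *
        ∏ j ∈ Finset.range k, c (ε (I j) ω)) ^ α)).toReal) = fun k : ℕ =>
        ((g (ε (I k) ω) + u (x (I k) ω)) * ∏ j ∈ Finset.range k, c (ε (I j) ω)) ^ α :=
      funext fun k => ENNReal.toReal_ofReal (Real.rpow_nonneg (hRnn k ω) α)
    rw [h2] at h1
    exact aux_summable_of_rpow (fun k => hRnn k ω) hα hα1 h1
  have hmono : ∀ᵐ ω ∂μ, ENNReal.ofReal ((∑' k : ℕ,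
      (g (ε (I k) ω) + u (x (I k) ω)) * ∏ j ∈ Finset.range k, c (ε (I j) ω)) ^ α) ≤
      ∑' k : ℕ, (A k ω + B k ω) * P k ω := by
    filter_upwards [hsummae] with ω hsum
    calc ENNReal.ofReal ((∑' k : ℕ,
        (g (ε (I k) ω) + u (x (I k) ω)) * ∏ j ∈ Finset.range k, c (ε (I j) ω)) ^ α)
        = ENNReal.ofReal (∑' k : ℕ,
            (g (ε (I k) ω) + u (x (I k) ω)) * ∏ j ∈ Finset.range k, c (ε (I j) ω)) ^ α :=
          (ENNReal.ofReal_rpow_of_nonneg (tsum_nonneg fun k => hRnn k ω) hα.le).symm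
      _ = (∑' k : ℕ, ENNReal.ofReal ((g (ε (I k) ω) + u (x (I k) ω)) *
            ∏ j ∈ Finset.range k, c (ε (I j) ω))) ^ α := by
          rw [ENNReal.ofReal_tsum_of_nonneg (fun k => hRnn k ω) hsum]
      _ ≤ ∑' k : ℕ, ENNReal.ofReal ((g (ε (I k) ω) + u (x (I k) ω)) *
            ∏ j ∈ Finset.range k, c (ε (I j) ω)) ^ α := aux_tsum_rpow hα hα1
      _ = ∑' k : ℕ, ENNReal.ofReal (((g (ε (I k) ω) + u (x (I k) ω)) *
            ∏ j ∈ Finset.range k, c (ε (I j) ω)) ^ α) :=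
          tsum_congr fun k => ENNReal.ofReal_rpow_of_nonneg (hRnn k ω) hα.le
      _ ≤ ∑' k : ℕ, (A k ω + B k ω) * P k ω := ENNReal.tsum_le_tsum fun k => hdom k ω
  exact ⟨hsummae, lt_of_le_of_lt (lintegral_mono_ae hmono) hfin⟩
end

section
/- Let (ε_t), (x_t) be independent sequences, (ε_t) i.i.d., (x_t) i.i.d., m ≥ 1 a natural number, and suppose E[g(ε_0)^m] < ∞, E[u(x_0)^m] < ∞, and the stationary volatility satisfies σ_t^δ = Σ_{k=0}^∞ [g(ε_{t-1-k}) + u(x_{t-1-k})] Π_{j=0}^{k-1} c(ε_{t-1-j}) with all summands independent appropriately, and E|ε_0|^{mδ} < ∞. If E|R_t|^{mδ} < ∞ where R_t = σ_t ε_t, then E[c(ε_0)^m] < 1. -/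
open MeasureTheory ProbabilityTheory
open scoped ENNReal

lemma garchx_sum_pow_le {m : ℕ} (hm : m ≠ 0) (s : Finset ℕ) (a : ℕ → ℝ)
    (ha : ∀ i, 0 ≤ a i) : ∑ i ∈ s, a i ^ m ≤ (∑ i ∈ s, a i) ^ m := by
  classical
  induction s using Finset.induction_on with
  | empty => simp [zero_pow hm]
  | @insert b s hb ih =>
    rw [Finset.sum_insert hb, Finset.sum_insert hb]
    calc a b ^ m + ∑ i ∈ s, a i ^ m ≤ a b ^ m + (∑ i ∈ s, a i) ^ m := by linarith
    _ ≤ (a b + ∑ i ∈ s, a i) ^ m :=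
        pow_add_pow_le (ha b) (Finset.sum_nonneg fun i _ => ha i) hm

lemma garchx_add_pow_le {a b : ℝ} (ha : 0 ≤ a) (hb : 0 ≤ b) (m : ℕ) :
    (a + b) ^ m ≤ 2 ^ m * (a ^ m + b ^ m) := by
  rcases le_total a b with h | h
  · calc (a + b) ^ m ≤ (2 * b) ^ m := by
          apply pow_le_pow_left₀ (by linarith); linarith
    _ = 2 ^ m * b ^ m := mul_pow 2 b m
    _ ≤ 2 ^ m * (a ^ m + b ^ m) := by
          have : (0:ℝ) ≤ a ^ m := pow_nonneg ha m
          have h2 : (0:ℝ) ≤ (2:ℝ) ^ m := by positivity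
          nlinarith
  · calc (a + b) ^ m ≤ (2 * a) ^ m := by
          apply pow_le_pow_left₀ (by linarith); linarith
    _ = 2 ^ m * a ^ m := mul_pow 2 a m
    _ ≤ 2 ^ m * (a ^ m + b ^ m) := by
          have : (0:ℝ) ≤ b ^ m := pow_nonneg hb m
          have h2 : (0:ℝ) ≤ (2:ℝ) ^ m := by positivity
          nlinarith

lemma garchx_lintegral_prod_indep {Ω ι : Type*} [MeasurableSpace Ω] {μ : Measure Ω}
    [IsProbabilityMeasure μ] (F : ι → Ω → ℝ≥0∞) (hF : ∀ i, Measurable (F i))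
    (hind : iIndepFun F μ) (S : Finset ι) :
    ∫⁻ ω, ∏ i ∈ S, F i ω ∂μ = ∏ i ∈ S, ∫⁻ ω, F i ω ∂μ := by
  classical
  induction S using Finset.induction_on with
  | empty => simp
  | @insert a s ha ih =>
    have hindep : IndepFun (∏ j ∈ s, F j) (F a) μ :=
      hind.indepFun_finsetProd_of_notMem hF ha
    have hmeasprod : Measurable (fun ω => ∏ j ∈ s, F j ω) :=
      Finset.measurable_prod s fun i _ => hF i
    have hmul := lintegral_mul_eq_lintegral_mul_lintegral_of_indepFun''
      (μ := μ) (f := fun ω => ∏ j ∈ s, F j ω) (g := F a)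
      hmeasprod.aemeasurable (hF a).aemeasurable (by
        convert hindep using 1
        ext ω
        simp [Finset.prod_apply])
    calc ∫⁻ ω, ∏ i ∈ insert a s, F i ω ∂μ
        = ∫⁻ ω, (∏ j ∈ s, F j ω) * F a ω ∂μ := by
          apply lintegral_congr; intro ω; rw [Finset.prod_insert ha, mul_comm]
      _ = (∫⁻ ω, ∏ j ∈ s, F j ω ∂μ) * ∫⁻ ω, F a ω ∂μ := hmul
      _ = ∏ i ∈ insert a s, ∫⁻ ω, F i ω ∂μ := by
          rw [ih, Finset.prod_insert ha, mul_comm]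

theorem garchx_moment_necessity
    {Ω : Type*} [MeasurableSpace Ω] (μ : Measure Ω) [IsProbabilityMeasure μ]
    (ε x : ℤ → Ω → ℝ) (c g u : ℝ → ℝ)
    (hc : Measurable c) (hg : Measurable g) (hu : Measurable u)
    (hc0 : ∀ y, 0 ≤ c y) (hg0 : ∀ y, 0 ≤ g y) (hu0 : ∀ y, 0 ≤ u y)
    (hmeasε : ∀ t, Measurable (ε t)) (hmeasx : ∀ t, Measurable (x t))
    -- the joint innovations (ε_t, x_t) are i.i.d., with ε_0 independent of x_0
    (hiid : iIndepFun (fun t ω => (ε t ω, x t ω)) μ)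
    (hident : ∀ t, IdentDistrib (fun ω => (ε t ω, x t ω)) (fun ω => (ε 0 ω, x 0 ω)) μ μ)
    (hindep : IndepFun (ε 0) (x 0) μ)
    (m : ℕ) (hm : 1 ≤ m) (δ : ℝ) (hδ : 0 < δ)
    (hgm : ∫⁻ ω, ENNReal.ofReal (g (ε 0 ω) ^ m) ∂μ < ⊤)
    (hum : ∫⁻ ω, ENNReal.ofReal (u (x 0 ω) ^ m) ∂μ < ⊤)
    (hεm : ∫⁻ ω, ENNReal.ofReal (|ε 0 ω| ^ ((m : ℝ) * δ)) ∂μ < ⊤)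
    -- nondegeneracy (ε not a.s. zero, volatility positive a.s.)
    (hεpos : 0 < ∫⁻ ω, ENNReal.ofReal (|ε 0 ω| ^ ((m : ℝ) * δ)) ∂μ)
    (hgu : 0 < ∫⁻ ω, ENNReal.ofReal (g (ε 0 ω) ^ m) ∂μ +
             ∫⁻ ω, ENNReal.ofReal (u (x 0 ω) ^ m) ∂μ)
    (t : ℤ)
    -- the causal series defining σ_t^δ converges a.s.
    (hsum : ∀ᵐ ω ∂μ, Summable (fun k : ℕ =>
        (g (ε (t - 1 - (k : ℤ)) ω) + u (x (t - 1 - (k : ℤ)) ω)) *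
          ∏ j ∈ Finset.range k, c (ε (t - 1 - (j : ℤ)) ω)))
    -- finiteness of E|R_t|^{mδ} = E[(σ_t^δ)^m |ε_t|^{mδ}]
    (hR : ∫⁻ ω, ENNReal.ofReal ((∑' k : ℕ,
        (g (ε (t - 1 - (k : ℤ)) ω) + u (x (t - 1 - (k : ℤ)) ω)) *
          ∏ j ∈ Finset.range k, c (ε (t - 1 - (j : ℤ)) ω)) ^ m *
        |ε t ω| ^ ((m : ℝ) * δ)) ∂μ < ⊤) :
    ∫⁻ ω, ENNReal.ofReal (c (ε 0 ω) ^ m) ∂μ < 1 := by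
  classical
  have hm0 : m ≠ 0 := by omega
  set A := ∫⁻ ω, ENNReal.ofReal (c (ε 0 ω) ^ m) ∂μ with hA
  set E := ∫⁻ ω, ENNReal.ofReal (|ε 0 ω| ^ ((m : ℝ) * δ)) ∂μ with hE
  set G := ∫⁻ ω, ENNReal.ofReal ((g (ε 0 ω) + u (x 0 ω)) ^ m) ∂μ with hG
  set R := ∫⁻ ω, ENNReal.ofReal ((∑' k : ℕ,
        (g (ε (t - 1 - (k : ℤ)) ω) + u (x (t - 1 - (k : ℤ)) ω)) *
          ∏ j ∈ Finset.range k, c (ε (t - 1 - (j : ℤ)) ω)) ^ m *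
        |ε t ω| ^ ((m : ℝ) * δ)) ∂μ with hRdef
  have hY : ∀ i : ℤ, Measurable (fun ω => (ε i ω, x i ω)) :=
    fun i => (hmeasε i).prodMk (hmeasx i)
  -- transfer to time 0 by identical distribution
  have htrans : ∀ (ψ : ℝ × ℝ → ℝ≥0∞), Measurable ψ → ∀ i : ℤ,
      ∫⁻ ω, ψ (ε i ω, x i ω) ∂μ = ∫⁻ ω, ψ (ε 0 ω, x 0 ω) ∂μ := by
    intro ψ hψ i
    rw [← lintegral_map hψ (hY i), (hident i).map_eq, lintegral_map hψ (hY 0)]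
  have hmeasg0 : Measurable fun ω => ENNReal.ofReal (g (ε 0 ω) ^ m) :=
    ENNReal.measurable_ofReal.comp ((hg.comp (hmeasε 0)).pow_const m)
  have hmeasu0 : Measurable fun ω => ENNReal.ofReal (u (x 0 ω) ^ m) :=
    ENNReal.measurable_ofReal.comp ((hu.comp (hmeasx 0)).pow_const m)
  -- G is finite
  have hGfin : G < ⊤ := by
    have hle : ∀ ω, ENNReal.ofReal ((g (ε 0 ω) + u (x 0 ω)) ^ m)
        ≤ ENNReal.ofReal ((2:ℝ) ^ m) *
          (ENNReal.ofReal (g (ε 0 ω) ^ m) + ENNReal.ofReal (u (x 0 ω) ^ m)) := by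
      intro ω
      rw [← ENNReal.ofReal_add (pow_nonneg (hg0 _) m) (pow_nonneg (hu0 _) m),
        ← ENNReal.ofReal_mul (by positivity)]
      exact ENNReal.ofReal_le_ofReal (garchx_add_pow_le (hg0 _) (hu0 _) m)
    calc G ≤ ∫⁻ ω, ENNReal.ofReal ((2:ℝ) ^ m) *
          (ENNReal.ofReal (g (ε 0 ω) ^ m) + ENNReal.ofReal (u (x 0 ω) ^ m)) ∂μ :=
        lintegral_mono hle
      _ = ENNReal.ofReal ((2:ℝ) ^ m) *
          ((∫⁻ ω, ENNReal.ofReal (g (ε 0 ω) ^ m) ∂μ) +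
            ∫⁻ ω, ENNReal.ofReal (u (x 0 ω) ^ m) ∂μ) := by
        rw [lintegral_const_mul (f := fun ω => ENNReal.ofReal (g (ε 0 ω) ^ m) + ENNReal.ofReal (u (x 0 ω) ^ m)) _ (hmeasg0.add hmeasu0), lintegral_add_left hmeasg0]
      _ < ⊤ := ENNReal.mul_lt_top ENNReal.ofReal_lt_top (ENNReal.add_lt_top.mpr ⟨hgm, hum⟩)
  -- G is positive
  have hGpos : 0 < G := by
    have hle : ∀ ω, ENNReal.ofReal (g (ε 0 ω) ^ m) + ENNReal.ofReal (u (x 0 ω) ^ m)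
        ≤ ENNReal.ofReal ((g (ε 0 ω) + u (x 0 ω)) ^ m) := by
      intro ω
      rw [← ENNReal.ofReal_add (pow_nonneg (hg0 _) m) (pow_nonneg (hu0 _) m)]
      exact ENNReal.ofReal_le_ofReal (pow_add_pow_le (hg0 _) (hu0 _) hm0)
    calc (0:ℝ≥0∞) < _ := hgu
      _ = ∫⁻ ω, (ENNReal.ofReal (g (ε 0 ω) ^ m) + ENNReal.ofReal (u (x 0 ω) ^ m)) ∂μ :=
        (lintegral_add_left hmeasg0 _).symm
      _ ≤ G := lintegral_mono hle
  -- the per-index functions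
  set φ : ℕ → ℤ → ℝ × ℝ → ℝ≥0∞ := fun k i p =>
    if i = t then ENNReal.ofReal (|p.1| ^ ((m : ℝ) * δ))
    else if i = t - 1 - (k : ℤ) then ENNReal.ofReal ((g p.1 + u p.2) ^ m)
    else ENNReal.ofReal (c p.1 ^ m) with hφ
  have hφmeas : ∀ k i, Measurable (φ k i) := by
    intro k i
    simp only [hφ]
    split_ifs
    · exact ENNReal.measurable_ofReal.comp ((measurable_fst.abs).pow measurable_const)
    · exact ENNReal.measurable_ofReal.comp
        (((hg.comp measurable_fst).add (hu.comp measurable_snd)).pow_const m)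
    · exact ENNReal.measurable_ofReal.comp ((hc.comp measurable_fst).pow_const m)
  set F : ℕ → ℤ → Ω → ℝ≥0∞ := fun k i ω => φ k i (ε i ω, x i ω) with hFdef
  have hFmeas : ∀ k i, Measurable (F k i) := fun k i => (hφmeas k i).comp (hY i)
  have hFind : ∀ k, iIndepFun (F k) μ :=
    fun k => hiid.comp (φ k) (hφmeas k)
  have he_ne_t : ∀ j : ℕ, t - 1 - (j : ℤ) ≠ t := by intro j; omega
  have he_inj : ∀ a b : ℕ, t - 1 - (a : ℤ) = t - 1 - (b : ℤ) → a = b := by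
    intro a b hab; omega
  set S : ℕ → Finset ℤ := fun k =>
    insert t ((Finset.range (k+1)).image (fun j : ℕ => t - 1 - (j : ℤ))) with hS
  have htS : ∀ k, t ∉ (Finset.range (k+1)).image (fun j : ℕ => t - 1 - (j : ℤ)) := by
    intro k hmem
    obtain ⟨j, _, hj⟩ := Finset.mem_image.mp hmem
    exact he_ne_t j hj
  -- pointwise identity for the k-th summand
  have hpt : ∀ (k : ℕ) (ω : Ω),
      ENNReal.ofReal (((g (ε (t - 1 - (k : ℤ)) ω) + u (x (t - 1 - (k : ℤ)) ω)) *
          ∏ j ∈ Finset.range k, c (ε (t - 1 - (j : ℤ)) ω)) ^ m *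
        |ε t ω| ^ ((m : ℝ) * δ)) = ∏ i ∈ S k, F k i ω := by
    intro k ω
    rw [hS, Finset.prod_insert (htS k),
      Finset.prod_image (fun a _ b _ hab => he_inj a b hab), Finset.prod_range_succ]
    have h1 : F k t ω = ENNReal.ofReal (|ε t ω| ^ ((m : ℝ) * δ)) := by
      simp [hFdef, hφ]
    have h2 : F k (t - 1 - (k : ℤ)) ω =
        ENNReal.ofReal ((g (ε (t - 1 - (k : ℤ)) ω) + u (x (t - 1 - (k : ℤ)) ω)) ^ m) := by
      simp [hFdef, hφ, he_ne_t k]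
    have h3 : ∀ j ∈ Finset.range k, F k (t - 1 - (j : ℤ)) ω =
        ENNReal.ofReal (c (ε (t - 1 - (j : ℤ)) ω) ^ m) := by
      intro j hj
      have hjk : j < k := Finset.mem_range.mp hj
      have hne : t - 1 - (j : ℤ) ≠ t - 1 - (k : ℤ) := by omega
      simp [hFdef, hφ, he_ne_t j, hne]
    rw [h1, h2, Finset.prod_congr rfl h3]
    have hgu_nn : (0:ℝ) ≤ g (ε (t - 1 - (k : ℤ)) ω) + u (x (t - 1 - (k : ℤ)) ω) :=
      add_nonneg (hg0 _) (hu0 _)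
    have hprod_nn : (0:ℝ) ≤ ∏ j ∈ Finset.range k, c (ε (t - 1 - (j : ℤ)) ω) :=
      Finset.prod_nonneg fun _ _ => hc0 _
    rw [ENNReal.ofReal_mul (pow_nonneg (mul_nonneg hgu_nn hprod_nn) m), mul_pow,
      ENNReal.ofReal_mul (pow_nonneg hgu_nn m), ← Finset.prod_pow,
      ENNReal.ofReal_prod_of_nonneg (fun j _ => pow_nonneg (hc0 _) m)]
    ring
  -- value of the k-th integral
  have hval : ∀ k : ℕ, ∫⁻ ω, (∏ i ∈ S k, F k i ω) ∂μ = E * (G * A ^ k) := by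
    intro k
    rw [garchx_lintegral_prod_indep (F k) (hFmeas k) (hFind k) (S k)]
    rw [hS, Finset.prod_insert (htS k),
      Finset.prod_image (fun a _ b _ hab => he_inj a b hab), Finset.prod_range_succ]
    have h1 : ∫⁻ ω, F k t ω ∂μ = E := by
      have := htrans (φ k t) (hφmeas k t) t
      rw [hFdef]
      rw [this]
      simp [hφ, hE]
    have h2 : ∫⁻ ω, F k (t - 1 - (k : ℤ)) ω ∂μ = G := by
      have := htrans (φ k (t - 1 - (k : ℤ))) (hφmeas k _) (t - 1 - (k : ℤ))
      rw [hFdef]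
      rw [this]
      simp [hφ, he_ne_t k, hG]
    have h3 : ∀ j ∈ Finset.range k, ∫⁻ ω, F k (t - 1 - (j : ℤ)) ω ∂μ = A := by
      intro j hj
      have hjk : j < k := Finset.mem_range.mp hj
      have hne : t - 1 - (j : ℤ) ≠ t - 1 - (k : ℤ) := by omega
      have := htrans (φ k (t - 1 - (j : ℤ))) (hφmeas k _) (t - 1 - (j : ℤ))
      rw [hFdef]
      rw [this]
      simp [hφ, he_ne_t j, hne, hA]
    rw [h1, h2, Finset.prod_congr rfl h3, Finset.prod_const, Finset.card_range]
    ring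
  -- partial sums bounded by R
  have hpartial : ∀ N : ℕ, ∑ k ∈ Finset.range N, E * (G * A ^ k) ≤ R := by
    intro N
    have hmeask : ∀ k : ℕ, Measurable (fun ω =>
        ENNReal.ofReal (((g (ε (t - 1 - (k : ℤ)) ω) + u (x (t - 1 - (k : ℤ)) ω)) *
            ∏ j ∈ Finset.range k, c (ε (t - 1 - (j : ℤ)) ω)) ^ m *
          |ε t ω| ^ ((m : ℝ) * δ))) := by
      intro k
      have : (fun ω => ENNReal.ofReal (((g (ε (t - 1 - (k : ℤ)) ω) + u (x (t - 1 - (k : ℤ)) ω)) *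
            ∏ j ∈ Finset.range k, c (ε (t - 1 - (j : ℤ)) ω)) ^ m *
          |ε t ω| ^ ((m : ℝ) * δ))) = fun ω => ∏ i ∈ S k, F k i ω := funext (hpt k)
      rw [this]
      exact Finset.measurable_prod _ fun i _ => hFmeas k i
    have hsum_int : ∑ k ∈ Finset.range N, E * (G * A ^ k)
        = ∫⁻ ω, ∑ k ∈ Finset.range N,
            ENNReal.ofReal (((g (ε (t - 1 - (k : ℤ)) ω) + u (x (t - 1 - (k : ℤ)) ω)) *
                ∏ j ∈ Finset.range k, c (ε (t - 1 - (j : ℤ)) ω)) ^ m *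
              |ε t ω| ^ ((m : ℝ) * δ)) ∂μ := by
      rw [lintegral_finset_sum _ (fun k _ => hmeask k)]
      refine Finset.sum_congr rfl fun k _ => ?_
      rw [lintegral_congr (hpt k), hval k]
    rw [hsum_int, hRdef]
    apply lintegral_mono_ae
    filter_upwards [hsum] with ω hω
    set a : ℕ → ℝ := fun k => (g (ε (t - 1 - (k : ℤ)) ω) + u (x (t - 1 - (k : ℤ)) ω)) *
        ∏ j ∈ Finset.range k, c (ε (t - 1 - (j : ℤ)) ω) with ha
    have ha_nn : ∀ k, 0 ≤ a k := fun k =>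
      mul_nonneg (add_nonneg (hg0 _) (hu0 _)) (Finset.prod_nonneg fun _ _ => hc0 _)
    have hw_nn : (0:ℝ) ≤ |ε t ω| ^ ((m : ℝ) * δ) := Real.rpow_nonneg (abs_nonneg _) _
    calc ∑ k ∈ Finset.range N, ENNReal.ofReal (a k ^ m * |ε t ω| ^ ((m : ℝ) * δ))
        = ENNReal.ofReal ((∑ k ∈ Finset.range N, a k ^ m) * |ε t ω| ^ ((m : ℝ) * δ)) := by
          rw [Finset.sum_mul, ENNReal.ofReal_sum_of_nonneg
            (fun k _ => mul_nonneg (pow_nonneg (ha_nn k) m) hw_nn)]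
      _ ≤ ENNReal.ofReal ((∑' k : ℕ, a k) ^ m * |ε t ω| ^ ((m : ℝ) * δ)) := by
          apply ENNReal.ofReal_le_ofReal
          apply mul_le_mul_of_nonneg_right _ hw_nn
          calc ∑ k ∈ Finset.range N, a k ^ m
              ≤ (∑ k ∈ Finset.range N, a k) ^ m := garchx_sum_pow_le hm0 _ _ ha_nn
            _ ≤ (∑' k : ℕ, a k) ^ m :=
              pow_le_pow_left₀ (Finset.sum_nonneg fun i _ => ha_nn i)
                (Summable.sum_le_tsum _ (fun i _ => ha_nn i) hω) m
  -- geometric series bound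
  have hgeo : E * G * ∑' k : ℕ, A ^ k ≤ R := by
    rw [ENNReal.tsum_eq_iSup_nat, ENNReal.mul_iSup]
    apply iSup_le
    intro N
    calc E * G * ∑ k ∈ Finset.range N, A ^ k
        = ∑ k ∈ Finset.range N, E * (G * A ^ k) := by
          rw [Finset.mul_sum]; exact Finset.sum_congr rfl fun k _ => (mul_assoc _ _ _)
      _ ≤ R := hpartial N
  have hEGne : E * G ≠ 0 := mul_ne_zero hεpos.ne' hGpos.ne'
  have htsumfin : ∑' k : ℕ, A ^ k ≠ ⊤ := by
    intro htop
    rw [htop, ENNReal.mul_top hEGne] at hgeo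
    exact (lt_irrefl ⊤ (lt_of_le_of_lt hgeo hR)).elim
  rw [ENNReal.tsum_geometric] at htsumfin
  have h1A : (1:ℝ≥0∞) - A ≠ 0 := ENNReal.inv_ne_top.mp htsumfin
  by_contra hcon
  exact h1A (tsub_eq_zero_of_le (not_lt.mp hcon))
end
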